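/- Fix k = 2 and let L, M ∈ ℝ, w₃, w₄ ∈ C²((0,∞)). Define Q on ℝ² \ {0} by Q(x) = w₃(r) E₃(φ) + w₄(r) E₄(φ), where (r,φ) are the polar coordinates of x and the frame is taken with k = 2. Then at every x ∈ ℝ² \ {0}: (L Δ + M 𝓛) Q = (L + M)( w₃''(r) + w₃'(r)/r − w₃(r)/r² ) E₃(φ) + L ( w₄''(r) + w₄'(r)/r − w₄(r)/r² ) E₄(φ), where Δ is the two-dimensional Laplacian applied componentwise. -/

import Mathlib

open Real Matrix MeasureTheory

noncomputable section

/-- Partial derivative in direction `i` of a scalar function on `ℝ²`. -/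
def pd2 (i : Fin 2) (f : (Fin 2 → ℝ) → ℝ) (x : Fin 2 → ℝ) : ℝ :=
  fderiv ℝ f x (Pi.single i 1)

/-- Partial derivative with index in `Fin 3`, with the convention `∂₃ ≡ 0`. -/
def pd (k : Fin 3) (f : (Fin 2 → ℝ) → ℝ) (x : Fin 2 → ℝ) : ℝ :=
  if h : (k : ℕ) < 2 then pd2 ⟨(k : ℕ), h⟩ f x else 0

/-- Componentwise two-dimensional Laplacian of a matrix-valued map. -/
def lap2 (Q : (Fin 2 → ℝ) → Matrix (Fin 3) (Fin 3) ℝ) (x : Fin 2 → ℝ) :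
    Matrix (Fin 3) (Fin 3) ℝ :=
  Matrix.of fun i j => ∑ k : Fin 2, pd2 k (fun y => pd2 k (fun z => Q z i j) y) x

/-- The operator `𝓛 Q_{ij} = ∂_j∂_k Q_{ik} + ∂_i∂_k Q_{jk} − (2/3)∂_l∂_k Q_{lk} δ_{ij}`. -/
def Lop (Q : (Fin 2 → ℝ) → Matrix (Fin 3) (Fin 3) ℝ) (x : Fin 2 → ℝ) :
    Matrix (Fin 3) (Fin 3) ℝ :=
  Matrix.of fun i j =>
    (∑ k, pd j (fun y => pd k (fun z => Q z i k) y) x)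
    + (∑ k, pd i (fun y => pd k (fun z => Q z j k) y) x)
    - (2/3) * (∑ l, ∑ k, pd l (fun y => pd k (fun z => Q z l k) y) x)
        * (if i = j then (1 : ℝ) else 0)

/-- The Euler–Lagrange equations (EL) at a point. -/
def EL (L M a2 b2 c2 : ℝ) (Q : (Fin 2 → ℝ) → Matrix (Fin 3) (Fin 3) ℝ)
    (x : Fin 2 → ℝ) : Prop :=
  L • lap2 Q x + M • Lop Q x =
    (-a2) • Q x
      - b2 • (Q x * Q x - ((Q x * Q x).trace / 3) • (1 : Matrix (Fin 3) (Fin 3) ℝ))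
      + (c2 * (Q x * Q x).trace) • Q x

def nv (k : ℤ) (φ : ℝ) : Fin 3 → ℝ :=
  ![Real.cos ((k : ℝ) * φ / 2), Real.sin ((k : ℝ) * φ / 2), 0]

def mv (k : ℤ) (φ : ℝ) : Fin 3 → ℝ :=
  ![-Real.sin ((k : ℝ) * φ / 2), Real.cos ((k : ℝ) * φ / 2), 0]

def e3 : Fin 3 → ℝ := ![0, 0, 1]

def E0 : Matrix (Fin 3) (Fin 3) ℝ :=
  Real.sqrt (3/2) • (vecMulVec e3 e3 - (1/3 : ℝ) • (1 : Matrix (Fin 3) (Fin 3) ℝ))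

def E1 (k : ℤ) (φ : ℝ) : Matrix (Fin 3) (Fin 3) ℝ :=
  Real.sqrt 2 •
    (vecMulVec (nv k φ) (nv k φ)
      - (1/2 : ℝ) • ((1 : Matrix (Fin 3) (Fin 3) ℝ) - vecMulVec e3 e3))

def E2 (k : ℤ) (φ : ℝ) : Matrix (Fin 3) (Fin 3) ℝ :=
  (Real.sqrt 2)⁻¹ • (vecMulVec (nv k φ) (mv k φ) + vecMulVec (mv k φ) (nv k φ))

def E3m (k : ℤ) (φ : ℝ) : Matrix (Fin 3) (Fin 3) ℝ :=
  (Real.sqrt 2)⁻¹ • (vecMulVec (nv k φ) e3 + vecMulVec e3 (nv k φ))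

def E4m (k : ℤ) (φ : ℝ) : Matrix (Fin 3) (Fin 3) ℝ :=
  (Real.sqrt 2)⁻¹ • (vecMulVec (mv k φ) e3 + vecMulVec e3 (mv k φ))

def sPlus (a2 b2 c2 : ℝ) : ℝ := (b2 + Real.sqrt (b2^2 + 24 * a2 * c2)) / (4 * c2)

/-- Rotation of `ℝ²` by angle `ψ`. -/
def rot2 (ψ : ℝ) (x : Fin 2 → ℝ) : Fin 2 → ℝ :=
  ![Real.cos ψ * x 0 - Real.sin ψ * x 1, Real.sin ψ * x 0 + Real.cos ψ * x 1]

/-- Rotation of `ℝ³` about `e₃` by angle `kψ/2`. -/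
def Rk (k : ℤ) (ψ : ℝ) : Matrix (Fin 3) (Fin 3) ℝ :=
  Matrix.of
    ![![Real.cos ((k : ℝ) * ψ / 2), -Real.sin ((k : ℝ) * ψ / 2), 0],
      ![Real.sin ((k : ℝ) * ψ / 2), Real.cos ((k : ℝ) * ψ / 2), 0],
      ![0, 0, 1]]

end

noncomputable section
namespace ElOp

def rr (x : Fin 2 → ℝ) : ℝ := Real.sqrt (x 0 ^ 2 + x 1 ^ 2)

lemma fin3_mk_two (h : 2 < 3) : (⟨2, h⟩ : Fin 3) = 2 := rfl
lemma fin2_mk_one (h : 1 < 2) : (⟨1, h⟩ : Fin 2) = 1 := rfl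

lemma pd_zero (f : (Fin 2 → ℝ) → ℝ) (x) : pd 0 f x = pd2 0 f x := rfl
lemma pd_one (f : (Fin 2 → ℝ) → ℝ) (x) : pd 1 f x = pd2 1 f x := rfl
lemma pd_two (f : (Fin 2 → ℝ) → ℝ) (x) : pd 2 f x = 0 := rfl

@[simp] lemma pd2_const (j : Fin 2) (c : ℝ) (x : Fin 2 → ℝ) :
    pd2 j (fun _ => c) x = 0 := by simp [pd2]

open ContinuousLinearMap in
lemma hasFDerivAt_rr (x : Fin 2 → ℝ) (hx : 0 < rr x) :
    HasFDerivAt rr ((rr x)⁻¹ • (x 0 • (proj 0 : (Fin 2 → ℝ) →L[ℝ] ℝ) + x 1 • proj 1)) x := by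
  have hqpos : 0 < x 0 ^ 2 + x 1 ^ 2 := Real.sqrt_pos.mp hx
  have h0 : HasFDerivAt (fun y : Fin 2 → ℝ => y 0) (proj 0 : (Fin 2 → ℝ) →L[ℝ] ℝ) x :=
    hasFDerivAt_apply 0 x
  have h1 : HasFDerivAt (fun y : Fin 2 → ℝ => y 1) (proj 1 : (Fin 2 → ℝ) →L[ℝ] ℝ) x :=
    hasFDerivAt_apply 1 x
  have hq : HasFDerivAt (fun y : Fin 2 → ℝ => y 0 ^ 2 + y 1 ^ 2)
      ((x 0 • (proj 0 : (Fin 2 → ℝ) →L[ℝ] ℝ) + x 0 • proj 0) + (x 1 • proj 1 + x 1 • proj 1)) x := by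
    have := (h0.mul h0).add (h1.mul h1)
    exact this.congr_of_eventuallyEq (Filter.Eventually.of_forall fun y => by simp [pow_two])
  have hs := (Real.hasDerivAt_sqrt hqpos.ne').comp_hasFDerivAt x hq
  refine hs.congr_fderiv ?_
  ext y
  have hr : rr x ≠ 0 := hx.ne'
  simp only [rr, ContinuousLinearMap.smul_apply, ContinuousLinearMap.add_apply,
    ContinuousLinearMap.proj_apply, ContinuousLinearMap.coe_smul', Pi.smul_apply, smul_eq_mul]
  field_simp
  ring

open ContinuousLinearMap in
lemma hasFDerivAt_radial_mul (g : ℝ → ℝ) (g' : ℝ) (p : (Fin 2 → ℝ) → ℝ)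
    (P : (Fin 2 → ℝ) →L[ℝ] ℝ) (x : Fin 2 → ℝ) (hx : 0 < rr x)
    (hg : HasDerivAt g g' (rr x)) (hp : HasFDerivAt p P x) :
    HasFDerivAt (fun y => g (rr y) * p y)
      (g (rr x) • P + (p x * g' / rr x) • (x 0 • (proj 0 : (Fin 2 → ℝ) →L[ℝ] ℝ) + x 1 • proj 1))
      x := by
  have hrr := hasFDerivAt_rr x hx
  have hgr := hg.comp_hasFDerivAt x hrr
  refine (hgr.mul hp).congr_fderiv ?_
  ext y
  have hr : rr x ≠ 0 := hx.ne'
  simp only [ContinuousLinearMap.smul_apply, ContinuousLinearMap.add_apply,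
    ContinuousLinearMap.proj_apply, ContinuousLinearMap.coe_smul', Pi.smul_apply, smul_eq_mul,
    Function.comp_apply]
  field_simp

open ContinuousLinearMap in
lemma hasFDerivAt_radial (g : ℝ → ℝ) (g' : ℝ) (x : Fin 2 → ℝ) (hx : 0 < rr x)
    (hg : HasDerivAt g g' (rr x)) :
    HasFDerivAt (fun y => g (rr y))
      ((g' / rr x) • (x 0 • (proj 0 : (Fin 2 → ℝ) →L[ℝ] ℝ) + x 1 • proj 1)) x := by
  have := hasFDerivAt_radial_mul g g' (fun _ => (1:ℝ)) 0 x hx hg (hasFDerivAt_const 1 x)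
  simpa using this

lemma pd2_eq {f : (Fin 2 → ℝ) → ℝ} {D : (Fin 2 → ℝ) →L[ℝ] ℝ} {x : Fin 2 → ℝ}
    (hf : HasFDerivAt f D x) (j : Fin 2) : pd2 j f x = D (Pi.single j 1) := by
  rw [pd2, hf.fderiv]

lemma pd2_congr (j : Fin 2) {f g : (Fin 2 → ℝ) → ℝ} {x : Fin 2 → ℝ} (hx : 0 < rr x)
    (h : ∀ y, 0 < rr y → f y = g y) : pd2 j f x = pd2 j g x := by
  have hS : IsOpen {y : Fin 2 → ℝ | 0 < rr y} := by
    have : Continuous rr := (Real.continuous_sqrt).comp (by continuity)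
    exact isOpen_lt continuous_const this
  have hev : f =ᶠ[nhds x] g :=
    Filter.eventuallyEq_of_mem (hS.mem_nhds hx) (fun y hy => h y hy)
  rw [pd2, pd2, hev.fderiv_eq]

open ContinuousLinearMap in
lemma eval_lin (x : Fin 2 → ℝ) (j : Fin 2) :
    ((x 0 • (proj 0 : (Fin 2 → ℝ) →L[ℝ] ℝ) + x 1 • proj 1 : (Fin 2 → ℝ) →L[ℝ] ℝ))
      (Pi.single j 1) = x j := by
  fin_cases j <;>
  simp [ContinuousLinearMap.smul_apply, ContinuousLinearMap.add_apply,
    ContinuousLinearMap.proj_apply, Pi.single_apply]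

def gg (u : ℝ → ℝ) (r : ℝ) : ℝ := (Real.sqrt 2)⁻¹ * u r / r
def ggd (u : ℝ → ℝ) (r : ℝ) : ℝ := (Real.sqrt 2)⁻¹ * (deriv u r * r - u r) / r ^ 2
def hh (u : ℝ → ℝ) (r : ℝ) : ℝ := (Real.sqrt 2)⁻¹ * (deriv u r * r - u r) / r ^ 3
def hhd (u : ℝ → ℝ) (r : ℝ) : ℝ :=
  (Real.sqrt 2)⁻¹ * (deriv (deriv u) r * r ^ 2 - 3 * (deriv u r * r - u r)) / r ^ 4

lemma hasDerivAt_gg (u : ℝ → ℝ) (r : ℝ) (hr : r ≠ 0)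
    (hu1 : HasDerivAt u (deriv u r) r) : HasDerivAt (gg u) (ggd u r) r := by
  have h := ((hu1.const_mul ((Real.sqrt 2)⁻¹)).div (hasDerivAt_id r) hr)
  refine h.congr_deriv ?_
  rw [ggd]; simp only [id]; field_simp

lemma hasDerivAt_hh (u : ℝ → ℝ) (r : ℝ) (hr : r ≠ 0)
    (hu1 : HasDerivAt u (deriv u r) r)
    (hu2 : HasDerivAt (deriv u) (deriv (deriv u) r) r) :
    HasDerivAt (hh u) (hhd u r) r := by
  have hnum : HasDerivAt (fun s => (Real.sqrt 2)⁻¹ * (deriv u s * s - u s))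
      ((Real.sqrt 2)⁻¹ * (deriv (deriv u) r * r + deriv u r * 1 - deriv u r)) r :=
    ((hu2.mul (hasDerivAt_id r)).sub hu1).const_mul _
  have hden : HasDerivAt (fun s : ℝ => s ^ 3) ((3:ℕ) * r ^ 2) r := by
    simpa using hasDerivAt_pow 3 r
  have h := hnum.div hden (pow_ne_zero 3 hr)
  refine h.congr_deriv ?_
  rw [hhd]; field_simp; ring

lemma contdiff_derivs {w : ℝ → ℝ} (hw : ContDiffOn ℝ 2 w (Set.Ioi 0)) {r : ℝ} (hr : 0 < r) :
    HasDerivAt w (deriv w r) r ∧ HasDerivAt (deriv w) (deriv (deriv w) r) r := by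
  constructor
  · exact ((hw.differentiableOn (by norm_num)).differentiableAt
      (Ioi_mem_nhds hr)).hasDerivAt
  · exact (((hw.deriv_of_isOpen isOpen_Ioi (m := 1) (by norm_num)).differentiableOn
      (by norm_num)).differentiableAt (Ioi_mem_nhds hr)).hasDerivAt

/-! ### the component functions -/

def F02f (u v : ℝ → ℝ) (y : Fin 2 → ℝ) : ℝ := gg u (rr y) * y 0 - gg v (rr y) * y 1
def F12f (u v : ℝ → ℝ) (y : Fin 2 → ℝ) : ℝ := gg u (rr y) * y 1 + gg v (rr y) * y 0
def P00f (u v : ℝ → ℝ) (y : Fin 2 → ℝ) : ℝ :=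
  hh u (rr y) * (y 0 * y 0) + gg u (rr y) - hh v (rr y) * (y 0 * y 1)
def P01f (u v : ℝ → ℝ) (y : Fin 2 → ℝ) : ℝ :=
  hh u (rr y) * (y 0 * y 1) - hh v (rr y) * (y 1 * y 1) - gg v (rr y)
def P10f (u v : ℝ → ℝ) (y : Fin 2 → ℝ) : ℝ :=
  hh u (rr y) * (y 0 * y 1) + hh v (rr y) * (y 0 * y 0) + gg v (rr y)
def P11f (u v : ℝ → ℝ) (y : Fin 2 → ℝ) : ℝ :=
  hh u (rr y) * (y 1 * y 1) + gg u (rr y) + hh v (rr y) * (y 0 * y 1)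

section FirstDeriv

variable {u v y} in

open ContinuousLinearMap in
lemma hasFDerivAt_F02 {u v : ℝ → ℝ} {y : Fin 2 → ℝ} (hy : 0 < rr y)
    (hu1 : HasDerivAt u (deriv u (rr y)) (rr y))
    (hv1 : HasDerivAt v (deriv v (rr y)) (rr y)) :
    HasFDerivAt (F02f u v)
      ((gg u (rr y) • (proj 0 : (Fin 2 → ℝ) →L[ℝ] ℝ)
          + (y 0 * ggd u (rr y) / rr y) • (y 0 • (proj 0 : (Fin 2 → ℝ) →L[ℝ] ℝ) + y 1 • proj 1))
        - (gg v (rr y) • (proj 1 : (Fin 2 → ℝ) →L[ℝ] ℝ)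
          + (y 1 * ggd v (rr y) / rr y) • (y 0 • (proj 0 : (Fin 2 → ℝ) →L[ℝ] ℝ) + y 1 • proj 1)))
      y :=
  (hasFDerivAt_radial_mul (gg u) (ggd u (rr y)) (fun z => z 0) _ y hy
      (hasDerivAt_gg u _ hy.ne' hu1) (hasFDerivAt_apply 0 y)).sub
    (hasFDerivAt_radial_mul (gg v) (ggd v (rr y)) (fun z => z 1) _ y hy
      (hasDerivAt_gg v _ hy.ne' hv1) (hasFDerivAt_apply 1 y))

open ContinuousLinearMap in
lemma hasFDerivAt_F12 {u v : ℝ → ℝ} {y : Fin 2 → ℝ} (hy : 0 < rr y)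
    (hu1 : HasDerivAt u (deriv u (rr y)) (rr y))
    (hv1 : HasDerivAt v (deriv v (rr y)) (rr y)) :
    HasFDerivAt (F12f u v)
      ((gg u (rr y) • (proj 1 : (Fin 2 → ℝ) →L[ℝ] ℝ)
          + (y 1 * ggd u (rr y) / rr y) • (y 0 • (proj 0 : (Fin 2 → ℝ) →L[ℝ] ℝ) + y 1 • proj 1))
        + (gg v (rr y) • (proj 0 : (Fin 2 → ℝ) →L[ℝ] ℝ)
          + (y 0 * ggd v (rr y) / rr y) • (y 0 • (proj 0 : (Fin 2 → ℝ) →L[ℝ] ℝ) + y 1 • proj 1)))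
      y :=
  (hasFDerivAt_radial_mul (gg u) (ggd u (rr y)) (fun z => z 1) _ y hy
      (hasDerivAt_gg u _ hy.ne' hu1) (hasFDerivAt_apply 1 y)).add
    (hasFDerivAt_radial_mul (gg v) (ggd v (rr y)) (fun z => z 0) _ y hy
      (hasDerivAt_gg v _ hy.ne' hv1) (hasFDerivAt_apply 0 y))

lemma pd2_F02_0 {u v : ℝ → ℝ} {y : Fin 2 → ℝ} (hy : 0 < rr y)
    (hu1 : HasDerivAt u (deriv u (rr y)) (rr y))
    (hv1 : HasDerivAt v (deriv v (rr y)) (rr y)) : pd2 0 (F02f u v) y = P00f u v y := by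
  rw [pd2_eq (hasFDerivAt_F02 hy hu1 hv1) 0]
  simp only [ContinuousLinearMap.sub_apply, ContinuousLinearMap.add_apply,
    ContinuousLinearMap.smul_apply, smul_eq_mul, eval_lin, ContinuousLinearMap.proj_apply]
  simp only [Pi.single_apply]
  norm_num [P00f, gg, ggd, hh]
  field_simp
  ring

lemma pd2_F02_1 {u v : ℝ → ℝ} {y : Fin 2 → ℝ} (hy : 0 < rr y)
    (hu1 : HasDerivAt u (deriv u (rr y)) (rr y))
    (hv1 : HasDerivAt v (deriv v (rr y)) (rr y)) : pd2 1 (F02f u v) y = P01f u v y := by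
  rw [pd2_eq (hasFDerivAt_F02 hy hu1 hv1) 1]
  simp only [ContinuousLinearMap.sub_apply, ContinuousLinearMap.add_apply,
    ContinuousLinearMap.smul_apply, smul_eq_mul, eval_lin, ContinuousLinearMap.proj_apply]
  simp only [Pi.single_apply]
  norm_num [P01f, gg, ggd, hh]
  field_simp
  ring

lemma pd2_F12_0 {u v : ℝ → ℝ} {y : Fin 2 → ℝ} (hy : 0 < rr y)
    (hu1 : HasDerivAt u (deriv u (rr y)) (rr y))
    (hv1 : HasDerivAt v (deriv v (rr y)) (rr y)) : pd2 0 (F12f u v) y = P10f u v y := by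
  rw [pd2_eq (hasFDerivAt_F12 hy hu1 hv1) 0]
  simp only [ContinuousLinearMap.add_apply,
    ContinuousLinearMap.smul_apply, smul_eq_mul, eval_lin, ContinuousLinearMap.proj_apply]
  simp only [Pi.single_apply]
  norm_num [P10f, gg, ggd, hh]
  field_simp
  ring

lemma pd2_F12_1 {u v : ℝ → ℝ} {y : Fin 2 → ℝ} (hy : 0 < rr y)
    (hu1 : HasDerivAt u (deriv u (rr y)) (rr y))
    (hv1 : HasDerivAt v (deriv v (rr y)) (rr y)) : pd2 1 (F12f u v) y = P11f u v y := by
  rw [pd2_eq (hasFDerivAt_F12 hy hu1 hv1) 1]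
  simp only [ContinuousLinearMap.add_apply,
    ContinuousLinearMap.smul_apply, smul_eq_mul, eval_lin, ContinuousLinearMap.proj_apply]
  simp only [Pi.single_apply]
  norm_num [P11f, gg, ggd, hh]
  field_simp
  ring

end FirstDeriv

section SecondDeriv

variable {u v : ℝ → ℝ} {x : Fin 2 → ℝ}

open ContinuousLinearMap in
lemma quad_fd (i1 i2 : Fin 2) (x : Fin 2 → ℝ) :
    HasFDerivAt (fun y : Fin 2 → ℝ => y i1 * y i2)
      (x i1 • (proj i2 : (Fin 2 → ℝ) →L[ℝ] ℝ) + x i2 • proj i1) x :=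
  (hasFDerivAt_apply i1 x).mul (hasFDerivAt_apply i2 x)

variable (hx : 0 < rr x)
  (hu1 : HasDerivAt u (deriv u (rr x)) (rr x))
  (hu2 : HasDerivAt (deriv u) (deriv (deriv u) (rr x)) (rr x))
  (hv1 : HasDerivAt v (deriv v (rr x)) (rr x))
  (hv2 : HasDerivAt (deriv v) (deriv (deriv v) (rr x)) (rr x))

include hx hu1 hu2 hv1 hv2

set_option maxHeartbeats 1000000 in
lemma pd2_P00_0 :
    pd2 0 (P00f u v) x
      = hh u (rr x) * (2 * x 0) + hhd u (rr x) * x 0 ^ 3 / rr x + ggd u (rr x) * x 0 / rr x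
        - hh v (rr x) * x 1 - hhd v (rr x) * (x 0 ^ 2 * x 1) / rr x := by
  have h := ((hasFDerivAt_radial_mul (hh u) (hhd u (rr x)) _ _ x hx
      (hasDerivAt_hh u _ hx.ne' hu1 hu2) (quad_fd 0 0 x)).add
    (hasFDerivAt_radial (gg u) (ggd u (rr x)) x hx
      (hasDerivAt_gg u _ hx.ne' hu1))).sub
    (hasFDerivAt_radial_mul (hh v) (hhd v (rr x)) _ _ x hx
      (hasDerivAt_hh v _ hx.ne' hv1 hv2) (quad_fd 0 1 x))
  rw [show (P00f u v)
      = (fun y => hh u (rr y) * (y 0 * y 0) + gg u (rr y) - hh v (rr y) * (y 0 * y 1))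
      from rfl, pd2_eq (f := (fun y => hh u (rr y) * (y 0 * y 0) + gg u (rr y) - hh v (rr y) * (y 0 * y 1))) h 0]
  simp only [ContinuousLinearMap.sub_apply, ContinuousLinearMap.add_apply,
    ContinuousLinearMap.smul_apply, smul_eq_mul, eval_lin, ContinuousLinearMap.proj_apply]
  simp only [Pi.single_apply]
  norm_num
  ring

set_option maxHeartbeats 1000000 in
lemma pd2_P00_1 :
    pd2 1 (P00f u v) x
      = hhd u (rr x) * (x 0 ^ 2 * x 1) / rr x + ggd u (rr x) * x 1 / rr x
        - hh v (rr x) * x 0 - hhd v (rr x) * (x 0 * x 1 ^ 2) / rr x := by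
  have h := ((hasFDerivAt_radial_mul (hh u) (hhd u (rr x)) _ _ x hx
      (hasDerivAt_hh u _ hx.ne' hu1 hu2) (quad_fd 0 0 x)).add
    (hasFDerivAt_radial (gg u) (ggd u (rr x)) x hx
      (hasDerivAt_gg u _ hx.ne' hu1))).sub
    (hasFDerivAt_radial_mul (hh v) (hhd v (rr x)) _ _ x hx
      (hasDerivAt_hh v _ hx.ne' hv1 hv2) (quad_fd 0 1 x))
  rw [show (P00f u v)
      = (fun y => hh u (rr y) * (y 0 * y 0) + gg u (rr y) - hh v (rr y) * (y 0 * y 1))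
      from rfl, pd2_eq (f := (fun y => hh u (rr y) * (y 0 * y 0) + gg u (rr y) - hh v (rr y) * (y 0 * y 1))) h 1]
  simp only [ContinuousLinearMap.sub_apply, ContinuousLinearMap.add_apply,
    ContinuousLinearMap.smul_apply, smul_eq_mul, eval_lin, ContinuousLinearMap.proj_apply]
  simp only [Pi.single_apply]
  norm_num
  ring

set_option maxHeartbeats 1000000 in
lemma pd2_P01_1 :
    pd2 1 (P01f u v) x
      = hh u (rr x) * x 0 + hhd u (rr x) * (x 0 * x 1 ^ 2) / rr x
        - hh v (rr x) * (2 * x 1) - hhd v (rr x) * x 1 ^ 3 / rr x - ggd v (rr x) * x 1 / rr x := by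
  have h := ((hasFDerivAt_radial_mul (hh u) (hhd u (rr x)) _ _ x hx
      (hasDerivAt_hh u _ hx.ne' hu1 hu2) (quad_fd 0 1 x)).sub
    (hasFDerivAt_radial_mul (hh v) (hhd v (rr x)) _ _ x hx
      (hasDerivAt_hh v _ hx.ne' hv1 hv2) (quad_fd 1 1 x))).sub
    (hasFDerivAt_radial (gg v) (ggd v (rr x)) x hx
      (hasDerivAt_gg v _ hx.ne' hv1))
  rw [show (P01f u v)
      = (fun y => hh u (rr y) * (y 0 * y 1) - hh v (rr y) * (y 1 * y 1) - gg v (rr y))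
      from rfl, pd2_eq (f := (fun y => hh u (rr y) * (y 0 * y 1) - hh v (rr y) * (y 1 * y 1) - gg v (rr y))) h 1]
  simp only [ContinuousLinearMap.sub_apply, ContinuousLinearMap.add_apply,
    ContinuousLinearMap.smul_apply, smul_eq_mul, eval_lin, ContinuousLinearMap.proj_apply]
  simp only [Pi.single_apply]
  norm_num
  ring

set_option maxHeartbeats 1000000 in
lemma pd2_P10_0 :
    pd2 0 (P10f u v) x
      = hh u (rr x) * x 1 + hhd u (rr x) * (x 0 ^ 2 * x 1) / rr x
        + hh v (rr x) * (2 * x 0) + hhd v (rr x) * x 0 ^ 3 / rr x + ggd v (rr x) * x 0 / rr x := by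
  have h := ((hasFDerivAt_radial_mul (hh u) (hhd u (rr x)) _ _ x hx
      (hasDerivAt_hh u _ hx.ne' hu1 hu2) (quad_fd 0 1 x)).add
    (hasFDerivAt_radial_mul (hh v) (hhd v (rr x)) _ _ x hx
      (hasDerivAt_hh v _ hx.ne' hv1 hv2) (quad_fd 0 0 x))).add
    (hasFDerivAt_radial (gg v) (ggd v (rr x)) x hx
      (hasDerivAt_gg v _ hx.ne' hv1))
  rw [show (P10f u v)
      = (fun y => hh u (rr y) * (y 0 * y 1) + hh v (rr y) * (y 0 * y 0) + gg v (rr y))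
      from rfl, pd2_eq (f := (fun y => hh u (rr y) * (y 0 * y 1) + hh v (rr y) * (y 0 * y 0) + gg v (rr y))) h 0]
  simp only [ContinuousLinearMap.sub_apply, ContinuousLinearMap.add_apply,
    ContinuousLinearMap.smul_apply, smul_eq_mul, eval_lin, ContinuousLinearMap.proj_apply]
  simp only [Pi.single_apply]
  norm_num
  ring

set_option maxHeartbeats 1000000 in
lemma pd2_P11_0 :
    pd2 0 (P11f u v) x
      = hhd u (rr x) * (x 0 * x 1 ^ 2) / rr x + ggd u (rr x) * x 0 / rr x
        + hh v (rr x) * x 1 + hhd v (rr x) * (x 0 ^ 2 * x 1) / rr x := by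
  have h := ((hasFDerivAt_radial_mul (hh u) (hhd u (rr x)) _ _ x hx
      (hasDerivAt_hh u _ hx.ne' hu1 hu2) (quad_fd 1 1 x)).add
    (hasFDerivAt_radial (gg u) (ggd u (rr x)) x hx
      (hasDerivAt_gg u _ hx.ne' hu1))).add
    (hasFDerivAt_radial_mul (hh v) (hhd v (rr x)) _ _ x hx
      (hasDerivAt_hh v _ hx.ne' hv1 hv2) (quad_fd 0 1 x))
  rw [show (P11f u v)
      = (fun y => hh u (rr y) * (y 1 * y 1) + gg u (rr y) + hh v (rr y) * (y 0 * y 1))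
      from rfl, pd2_eq (f := (fun y => hh u (rr y) * (y 1 * y 1) + gg u (rr y) + hh v (rr y) * (y 0 * y 1))) h 0]
  simp only [ContinuousLinearMap.sub_apply, ContinuousLinearMap.add_apply,
    ContinuousLinearMap.smul_apply, smul_eq_mul, eval_lin, ContinuousLinearMap.proj_apply]
  simp only [Pi.single_apply]
  norm_num
  ring

set_option maxHeartbeats 1000000 in
lemma pd2_P11_1 :
    pd2 1 (P11f u v) x
      = hh u (rr x) * (2 * x 1) + hhd u (rr x) * x 1 ^ 3 / rr x + ggd u (rr x) * x 1 / rr x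
        + hh v (rr x) * x 0 + hhd v (rr x) * (x 0 * x 1 ^ 2) / rr x := by
  have h := ((hasFDerivAt_radial_mul (hh u) (hhd u (rr x)) _ _ x hx
      (hasDerivAt_hh u _ hx.ne' hu1 hu2) (quad_fd 1 1 x)).add
    (hasFDerivAt_radial (gg u) (ggd u (rr x)) x hx
      (hasDerivAt_gg u _ hx.ne' hu1))).add
    (hasFDerivAt_radial_mul (hh v) (hhd v (rr x)) _ _ x hx
      (hasDerivAt_hh v _ hx.ne' hv1 hv2) (quad_fd 0 1 x))
  rw [show (P11f u v)
      = (fun y => hh u (rr y) * (y 1 * y 1) + gg u (rr y) + hh v (rr y) * (y 0 * y 1))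
      from rfl, pd2_eq (f := (fun y => hh u (rr y) * (y 1 * y 1) + gg u (rr y) + hh v (rr y) * (y 0 * y 1))) h 1]
  simp only [ContinuousLinearMap.sub_apply, ContinuousLinearMap.add_apply,
    ContinuousLinearMap.smul_apply, smul_eq_mul, eval_lin, ContinuousLinearMap.proj_apply]
  simp only [Pi.single_apply]
  norm_num
  ring

end SecondDeriv



lemma Qrep (w3 w4 : ℝ → ℝ) (Q : (Fin 2 → ℝ) → Matrix (Fin 3) (Fin 3) ℝ)
    (hQ : ∀ r > (0 : ℝ), ∀ φ : ℝ,
      Q ![r * Real.cos φ, r * Real.sin φ] = w3 r • E3m 2 φ + w4 r • E4m 2 φ)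
    (z : Fin 2 → ℝ) (hz : 0 < rr z) :
    Q z = Matrix.of
      ![![0, 0, F02f w3 w4 z], ![0, 0, F12f w3 w4 z], ![F02f w3 w4 z, F12f w3 w4 z, 0]] := by
  have hzq : 0 < z 0 ^ 2 + z 1 ^ 2 := Real.sqrt_pos.mp hz
  set w : ℂ := ⟨z 0, z 1⟩ with hw_def
  have hw : w ≠ 0 := by
    intro h
    have h0 : z 0 = 0 := congrArg Complex.re h
    have h1 : z 1 = 0 := congrArg Complex.im h
    rw [h0, h1] at hzq; norm_num at hzq
  have habs : ‖w‖ = rr z := by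
    rw [Complex.norm_def, rr]
    congr 1
    simp [Complex.normSq_mk, hw_def]
    ring
  have hcos : Real.cos (Complex.arg w) = z 0 / rr z := by
    rw [Complex.cos_arg hw, habs]
  have hsin : Real.sin (Complex.arg w) = z 1 / rr z := by
    rw [Complex.sin_arg, habs]
  have hzz : ![rr z * Real.cos (Complex.arg w), rr z * Real.sin (Complex.arg w)] = z := by
    funext i
    fin_cases i
    · show rr z * Real.cos (Complex.arg w) = z 0
      rw [hcos]; field_simp
    · show rr z * Real.sin (Complex.arg w) = z 1
      rw [hsin]; field_simp
  have h := hQ (rr z) hz (Complex.arg w)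
  rw [hzz] at h
  rw [h]
  have hphi : ((2:ℤ):ℝ) * Complex.arg w / 2 = Complex.arg w := by push_cast; ring
  have hrne : rr z ≠ 0 := hz.ne'
  ext i j
  fin_cases i <;> fin_cases j <;>
    · simp [E3m, E4m, nv, mv, e3, Matrix.vecMulVec_apply, hphi, hcos, hsin,
        F02f, F12f, gg, Matrix.smul_apply, Matrix.add_apply]
      try field_simp
      try ring


end ElOp
end

set_option maxHeartbeats 4000000 in
open ElOp in
/-- For `k = 2`,
`(LΔ + M𝓛)(w₃E₃ + w₄E₄) = (L+M)(w₃'' + w₃'/r − w₃/r²)E₃ + L(w₄'' + w₄'/r − w₄/r²)E₄`. -/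
theorem elastic_operator_of_E3_E4_k2
    (L M : ℝ) (w3 w4 : ℝ → ℝ)
    (hw3 : ContDiffOn ℝ 2 w3 (Set.Ioi 0)) (hw4 : ContDiffOn ℝ 2 w4 (Set.Ioi 0))
    (Q : (Fin 2 → ℝ) → Matrix (Fin 3) (Fin 3) ℝ)
    (hQ : ∀ r > (0 : ℝ), ∀ φ : ℝ,
      Q ![r * Real.cos φ, r * Real.sin φ] = w3 r • E3m 2 φ + w4 r • E4m 2 φ) :
    ∀ r > (0 : ℝ), ∀ φ : ℝ,
      L • lap2 Q ![r * Real.cos φ, r * Real.sin φ]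
        + M • Lop Q ![r * Real.cos φ, r * Real.sin φ] =
      ((L + M) * (deriv (deriv w3) r + deriv w3 r / r - w3 r / r^2)) • E3m 2 φ
        + (L * (deriv (deriv w4) r + deriv w4 r / r - w4 r / r^2)) • E4m 2 φ := by
  intro r hr φ
  have hrne : r ≠ 0 := hr.ne'
  set x : Fin 2 → ℝ := ![r * Real.cos φ, r * Real.sin φ] with hxdef
  have hx0 : x 0 = r * Real.cos φ := rfl
  have hx1 : x 1 = r * Real.sin φ := rfl
  have hrx : rr x = r := by
    rw [rr, hx0, hx1,
      show (r * Real.cos φ) ^ 2 + (r * Real.sin φ) ^ 2 = r ^ 2 by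
        linear_combination r ^ 2 * (Real.sin_sq_add_cos_sq φ)]
    exact Real.sqrt_sq hr.le
  have hx : 0 < rr x := by rw [hrx]; exact hr
  have hphi : ((2:ℤ):ℝ) * φ / 2 = φ := by push_cast; ring
  have hrep := Qrep w3 w4 Q hQ
  have h02 : ∀ z, 0 < rr z → Q z 0 2 = F02f w3 w4 z := fun z hz => by rw [hrep z hz]; simp
  have h20 : ∀ z, 0 < rr z → Q z 2 0 = F02f w3 w4 z := fun z hz => by rw [hrep z hz]; simp
  have h12 : ∀ z, 0 < rr z → Q z 1 2 = F12f w3 w4 z := fun z hz => by rw [hrep z hz]; simp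
  have h21 : ∀ z, 0 < rr z → Q z 2 1 = F12f w3 w4 z := fun z hz => by rw [hrep z hz]; simp
  have h00 : ∀ z, 0 < rr z → Q z 0 0 = 0 := fun z hz => by rw [hrep z hz]; simp
  have h01 : ∀ z, 0 < rr z → Q z 0 1 = 0 := fun z hz => by rw [hrep z hz]; simp
  have h10 : ∀ z, 0 < rr z → Q z 1 0 = 0 := fun z hz => by rw [hrep z hz]; simp
  have h11 : ∀ z, 0 < rr z → Q z 1 1 = 0 := fun z hz => by rw [hrep z hz]; simp
  have h22 : ∀ z, 0 < rr z → Q z 2 2 = 0 := fun z hz => by rw [hrep z hz]; simp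
  have hu1 : ∀ s : ℝ, 0 < s → HasDerivAt w3 (deriv w3 s) s :=
    fun s hs => (contdiff_derivs hw3 hs).1
  have hu2 : ∀ s : ℝ, 0 < s → HasDerivAt (deriv w3) (deriv (deriv w3) s) s :=
    fun s hs => (contdiff_derivs hw3 hs).2
  have hv1 : ∀ s : ℝ, 0 < s → HasDerivAt w4 (deriv w4 s) s :=
    fun s hs => (contdiff_derivs hw4 hs).1
  have hv2 : ∀ s : ℝ, 0 < s → HasDerivAt (deriv w4) (deriv (deriv w4) s) s :=
    fun s hs => (contdiff_derivs hw4 hs).2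
  have d02_0 : ∀ y, 0 < rr y → pd2 0 (fun z => Q z 0 2) y = P00f w3 w4 y := fun y hy => by
    rw [pd2_congr 0 hy h02]; exact pd2_F02_0 hy (hu1 _ hy) (hv1 _ hy)
  have d02_1 : ∀ y, 0 < rr y → pd2 1 (fun z => Q z 0 2) y = P01f w3 w4 y := fun y hy => by
    rw [pd2_congr 1 hy h02]; exact pd2_F02_1 hy (hu1 _ hy) (hv1 _ hy)
  have d12_0 : ∀ y, 0 < rr y → pd2 0 (fun z => Q z 1 2) y = P10f w3 w4 y := fun y hy => by
    rw [pd2_congr 0 hy h12]; exact pd2_F12_0 hy (hu1 _ hy) (hv1 _ hy)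
  have d12_1 : ∀ y, 0 < rr y → pd2 1 (fun z => Q z 1 2) y = P11f w3 w4 y := fun y hy => by
    rw [pd2_congr 1 hy h12]; exact pd2_F12_1 hy (hu1 _ hy) (hv1 _ hy)
  have d20_0 : ∀ y, 0 < rr y → pd2 0 (fun z => Q z 2 0) y = P00f w3 w4 y := fun y hy => by
    rw [pd2_congr 0 hy h20]; exact pd2_F02_0 hy (hu1 _ hy) (hv1 _ hy)
  have d20_1 : ∀ y, 0 < rr y → pd2 1 (fun z => Q z 2 0) y = P01f w3 w4 y := fun y hy => by
    rw [pd2_congr 1 hy h20]; exact pd2_F02_1 hy (hu1 _ hy) (hv1 _ hy)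
  have d21_0 : ∀ y, 0 < rr y → pd2 0 (fun z => Q z 2 1) y = P10f w3 w4 y := fun y hy => by
    rw [pd2_congr 0 hy h21]; exact pd2_F12_0 hy (hu1 _ hy) (hv1 _ hy)
  have d21_1 : ∀ y, 0 < rr y → pd2 1 (fun z => Q z 2 1) y = P11f w3 w4 y := fun y hy => by
    rw [pd2_congr 1 hy h21]; exact pd2_F12_1 hy (hu1 _ hy) (hv1 _ hy)
  have hzero : ∀ (i j : Fin 3), (∀ z, 0 < rr z → Q z i j = 0) →
      ∀ (kk jj : Fin 2), pd2 jj (fun y => pd2 kk (fun z => Q z i j) y) x = 0 := by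
    intro i j hij kk jj
    have hin : ∀ y, 0 < rr y → pd2 kk (fun z => Q z i j) y = (0:ℝ) := fun y hy => by
      rw [pd2_congr kk (g := fun _ => (0:ℝ)) hy (fun z hz => hij z hz)]
      exact pd2_const _ _ _
    rw [pd2_congr jj (g := fun _ => (0:ℝ)) hx hin]
    exact pd2_const _ _ _
  have V1 := pd2_P00_0 (u := w3) (v := w4) hx (hu1 _ hx) (hu2 _ hx) (hv1 _ hx) (hv2 _ hx)
  have V2 := pd2_P00_1 (u := w3) (v := w4) hx (hu1 _ hx) (hu2 _ hx) (hv1 _ hx) (hv2 _ hx)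
  have V3 := pd2_P01_1 (u := w3) (v := w4) hx (hu1 _ hx) (hu2 _ hx) (hv1 _ hx) (hv2 _ hx)
  have V4 := pd2_P10_0 (u := w3) (v := w4) hx (hu1 _ hx) (hu2 _ hx) (hv1 _ hx) (hv2 _ hx)
  have V5 := pd2_P11_0 (u := w3) (v := w4) hx (hu1 _ hx) (hu2 _ hx) (hv1 _ hx) (hv2 _ hx)
  have V6 := pd2_P11_1 (u := w3) (v := w4) hx (hu1 _ hx) (hu2 _ hx) (hv1 _ hx) (hv2 _ hx)
  have A1 : pd2 0 (fun y => pd2 0 (fun z => Q z 0 2) y) x = _ := (pd2_congr 0 hx d02_0).trans V1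
  have A2 : pd2 1 (fun y => pd2 1 (fun z => Q z 0 2) y) x = _ := (pd2_congr 1 hx d02_1).trans V3
  have A3 : pd2 0 (fun y => pd2 0 (fun z => Q z 1 2) y) x = _ := (pd2_congr 0 hx d12_0).trans V4
  have A4 : pd2 1 (fun y => pd2 1 (fun z => Q z 1 2) y) x = _ := (pd2_congr 1 hx d12_1).trans V6
  have A5 : pd2 0 (fun y => pd2 0 (fun z => Q z 2 0) y) x = _ := (pd2_congr 0 hx d20_0).trans V1
  have A6 : pd2 1 (fun y => pd2 1 (fun z => Q z 2 0) y) x = _ := (pd2_congr 1 hx d20_1).trans V3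
  have A7 : pd2 0 (fun y => pd2 0 (fun z => Q z 2 1) y) x = _ := (pd2_congr 0 hx d21_0).trans V4
  have A8 : pd2 1 (fun y => pd2 1 (fun z => Q z 2 1) y) x = _ := (pd2_congr 1 hx d21_1).trans V6
  have B1 : pd2 0 (fun y => pd2 1 (fun z => Q z 2 1) y) x = _ := (pd2_congr 0 hx d21_1).trans V5
  have B2 : pd2 1 (fun y => pd2 0 (fun z => Q z 2 0) y) x = _ := (pd2_congr 1 hx d20_0).trans V2
  have h3c : (r * Real.cos φ) ^ 3
      = (r * Real.cos φ) * r ^ 2 - (r * Real.cos φ) * (r * Real.sin φ) ^ 2 := by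
    linear_combination (r ^ 3 * Real.cos φ) * (Real.sin_sq_add_cos_sq φ)
  have h3s : (r * Real.sin φ) ^ 3
      = (r * Real.sin φ) * r ^ 2 - (r * Real.sin φ) * (r * Real.cos φ) ^ 2 := by
    linear_combination (r ^ 3 * Real.sin φ) * (Real.sin_sq_add_cos_sq φ)
  ext i j
  fin_cases i <;> fin_cases j
  · -- (0,0)
    simp only [lap2, Lop, Matrix.of_apply, Matrix.add_apply, Matrix.smul_apply, smul_eq_mul,
      Fin.sum_univ_two, Fin.sum_univ_three, Fin.mk_zero, Fin.mk_one, fin3_mk_two, fin2_mk_one,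
      Fin.isValue, pd_zero, pd_one, pd_two, pd2_const,
      hzero 0 0 h00, hzero 0 1 h01, hzero 1 0 h10, hzero 1 1 h11, hzero 2 2 h22]
    norm_num [E3m, E4m, nv, mv, e3, Matrix.vecMulVec_apply, hphi]
  · -- (0,1)
    simp only [lap2, Lop, Matrix.of_apply, Matrix.add_apply, Matrix.smul_apply, smul_eq_mul,
      Fin.sum_univ_two, Fin.sum_univ_three, Fin.mk_zero, Fin.mk_one, fin3_mk_two, fin2_mk_one,
      Fin.isValue, pd_zero, pd_one, pd_two, pd2_const,
      hzero 0 0 h00, hzero 0 1 h01, hzero 1 0 h10, hzero 1 1 h11, hzero 2 2 h22]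
    norm_num [E3m, E4m, nv, mv, e3, Matrix.vecMulVec_apply, hphi]
  · -- (0,2)
    simp only [lap2, Lop, Matrix.of_apply, Matrix.add_apply, Matrix.smul_apply, smul_eq_mul,
      Fin.sum_univ_two, Fin.sum_univ_three, Fin.mk_zero, Fin.mk_one, fin3_mk_two, fin2_mk_one,
      Fin.isValue, pd_zero, pd_one, pd_two, pd2_const]
    rw [A1, A2, A5, B1, hrx, hx0, hx1, h3c, h3s]
    simp [gg, ggd, hh, hhd, E3m, E4m, nv, mv, e3, Matrix.vecMulVec_apply, hphi]
    field_simp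
    ring
  · -- (1,0)
    simp only [lap2, Lop, Matrix.of_apply, Matrix.add_apply, Matrix.smul_apply, smul_eq_mul,
      Fin.sum_univ_two, Fin.sum_univ_three, Fin.mk_zero, Fin.mk_one, fin3_mk_two, fin2_mk_one,
      Fin.isValue, pd_zero, pd_one, pd_two, pd2_const,
      hzero 0 0 h00, hzero 0 1 h01, hzero 1 0 h10, hzero 1 1 h11, hzero 2 2 h22]
    norm_num [E3m, E4m, nv, mv, e3, Matrix.vecMulVec_apply, hphi]
  · -- (1,1)
    simp only [lap2, Lop, Matrix.of_apply, Matrix.add_apply, Matrix.smul_apply, smul_eq_mul,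
      Fin.sum_univ_two, Fin.sum_univ_three, Fin.mk_zero, Fin.mk_one, fin3_mk_two, fin2_mk_one,
      Fin.isValue, pd_zero, pd_one, pd_two, pd2_const,
      hzero 0 0 h00, hzero 0 1 h01, hzero 1 0 h10, hzero 1 1 h11, hzero 2 2 h22]
    norm_num [E3m, E4m, nv, mv, e3, Matrix.vecMulVec_apply, hphi]
  · -- (1,2)
    simp only [lap2, Lop, Matrix.of_apply, Matrix.add_apply, Matrix.smul_apply, smul_eq_mul,
      Fin.sum_univ_two, Fin.sum_univ_three, Fin.mk_zero, Fin.mk_one, fin3_mk_two, fin2_mk_one,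
      Fin.isValue, pd_zero, pd_one, pd_two, pd2_const]
    rw [A3, A4, B2, A8, hrx, hx0, hx1, h3c, h3s]
    simp [gg, ggd, hh, hhd, E3m, E4m, nv, mv, e3, Matrix.vecMulVec_apply, hphi]
    field_simp
    ring
  · -- (2,0)
    simp only [lap2, Lop, Matrix.of_apply, Matrix.add_apply, Matrix.smul_apply, smul_eq_mul,
      Fin.sum_univ_two, Fin.sum_univ_three, Fin.mk_zero, Fin.mk_one, fin3_mk_two, fin2_mk_one,
      Fin.isValue, pd_zero, pd_one, pd_two, pd2_const]
    rw [A5, A6, B1, hrx, hx0, hx1, h3c, h3s]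
    simp [gg, ggd, hh, hhd, E3m, E4m, nv, mv, e3, Matrix.vecMulVec_apply, hphi]
    field_simp
    ring
  · -- (2,1)
    simp only [lap2, Lop, Matrix.of_apply, Matrix.add_apply, Matrix.smul_apply, smul_eq_mul,
      Fin.sum_univ_two, Fin.sum_univ_three, Fin.mk_zero, Fin.mk_one, fin3_mk_two, fin2_mk_one,
      Fin.isValue, pd_zero, pd_one, pd_two, pd2_const]
    rw [A7, A8, B2, hrx, hx0, hx1, h3c, h3s]
    simp [gg, ggd, hh, hhd, E3m, E4m, nv, mv, e3, Matrix.vecMulVec_apply, hphi]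
    field_simp
    ring
  · -- (2,2)
    simp only [lap2, Lop, Matrix.of_apply, Matrix.add_apply, Matrix.smul_apply, smul_eq_mul,
      Fin.sum_univ_two, Fin.sum_univ_three, Fin.mk_zero, Fin.mk_one, fin3_mk_two, fin2_mk_one,
      Fin.isValue, pd_zero, pd_one, pd_two, pd2_const,
      hzero 0 0 h00, hzero 0 1 h01, hzero 1 0 h10, hzero 1 1 h11, hzero 2 2 h22]
    norm_num [E3m, E4m, nv, mv, e3, Matrix.vecMulVec_apply, hphi, Matrix.cons_val_two,
      Matrix.tail_cons, Matrix.head_cons]
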